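/- Let ψ : ℝ → ℝ be integrable, compactly supported, with ∫_ℝ ψ(x) dx = 0. Let 0 < α ≤ 1 and let f : ℝ → ℝ be bounded, measurable, and Hölder continuous with exponent α and constant C, i.e. |f(x + δ) − f(x)| ≤ C·|δ|^α for all x, δ ∈ ℝ. Then there exists a constant C′ ≥ 0 such that for every a ≠ 0 and every b ∈ ℝ, |⟨f, ψ^{a,b}⟩| = |∫_ℝ f(x)·|a|^{−1/2}·ψ((x − b)/a) dx| ≤ C′·|a|^{α + 1/2}. -/

import Mathlib

open MeasureTheory Real

/-- **Theorem 3.2** (compact support of wavelet base).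
If `ψ` is integrable, compactly supported with `∫ ψ = 0`, and `f` is bounded, measurable
and Hölder continuous with exponent `α ∈ (0, 1]` and constant `C`, then there is `C' ≥ 0`
with `|⟨f, ψ^{a,b}⟩| ≤ C' · |a| ^ (α + 1/2)` for all `a ≠ 0`, `b`. -/
theorem wavelet_coeff_decay_of_holder_compact_support
    (ψ f : ℝ → ℝ) (α C : ℝ)
    (hψ_int : Integrable ψ)
    (hψ_supp : HasCompactSupport ψ)
    (hψ_zero : (∫ x : ℝ, ψ x) = 0)
    (hα_pos : 0 < α) (hα_le : α ≤ 1)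
    (hf_meas : Measurable f)
    (hf_bdd : ∃ B : ℝ, ∀ x : ℝ, |f x| ≤ B)
    (hf_holder : ∀ x δ : ℝ, |f (x + δ) - f x| ≤ C * |δ| ^ α) :
    ∃ C' : ℝ, 0 ≤ C' ∧ ∀ a : ℝ, a ≠ 0 → ∀ b : ℝ,
      |∫ x : ℝ, f x * (|a| ^ (-(1 : ℝ) / 2) * ψ ((x - b) / a))| ≤
        C' * |a| ^ (α + 1 / 2) := by
  obtain ⟨B, hB⟩ := hf_bdd
  -- C is nonnegative
  have hC : 0 ≤ C := by
    have h := hf_holder 0 1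
    simp at h
    exact le_trans (abs_nonneg _) h
  -- bound the support of ψ
  obtain ⟨R₀, hR₀⟩ := (hψ_supp.isBounded).subset_closedBall 0
  set R : ℝ := max R₀ 0 with hRdef
  have hR0 : 0 ≤ R := le_max_right _ _
  have hR : ∀ t : ℝ, ψ t ≠ 0 → |t| ≤ R := by
    intro t ht
    have : t ∈ tsupport ψ := subset_tsupport ψ ht
    have := hR₀ this
    rw [Metric.mem_closedBall, Real.dist_eq, sub_zero] at this
    exact this.trans (le_max_left _ _)
  refine ⟨C * R ^ α * ∫ x, |ψ x|, by positivity, ?_⟩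
  intro a ha b
  have hA : (0:ℝ) < |a| := abs_pos.mpr ha
  set c : ℝ := |a| ^ (-(1:ℝ)/2) with hc
  have hcpos : 0 < c := Real.rpow_pos_of_pos hA _
  -- integrability
  have hcomp : Integrable (fun x : ℝ => ψ ((x - b) / a)) :=
    (hψ_int.comp_div ha).comp_sub_right b
  have hfb : Integrable (fun x : ℝ => (f x - f b) * ψ ((x - b) / a)) :=
    hcomp.bdd_mul ((hf_meas.sub measurable_const).aestronglyMeasurable)
      (c := B + |f b|) (Filter.Eventually.of_forall fun x => by
        have := hB x
        calc ‖f x - f b‖ ≤ ‖f x‖ + ‖f b‖ := norm_sub_le _ _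
          _ ≤ B + |f b| := by
            simp only [Real.norm_eq_abs]; exact add_le_add this le_rfl)
  -- the translated-dilated ψ has zero integral
  have h0 : (∫ x : ℝ, ψ ((x - b) / a)) = 0 := by
    rw [integral_sub_right_eq_self (fun x : ℝ => ψ (x / a)) b,
      Measure.integral_comp_div ψ a, hψ_zero, smul_zero]
  -- rewrite the integral
  have key : (∫ x : ℝ, f x * (c * ψ ((x - b) / a)))
      = c * ∫ x : ℝ, (f x - f b) * ψ ((x - b) / a) := by
    have h1 : (fun x : ℝ => f x * (c * ψ ((x - b) / a)))
        = fun x : ℝ => c * ((f x - f b) * ψ ((x - b) / a) + f b * ψ ((x - b) / a)) := by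
      funext x; ring
    rw [h1, MeasureTheory.integral_const_mul,
      integral_add hfb (hcomp.const_mul (f b)), MeasureTheory.integral_const_mul, h0,
      mul_zero, add_zero]
  rw [key, abs_mul, abs_of_pos hcpos]
  -- pointwise bound
  have hpt : ∀ x : ℝ, |(f x - f b) * ψ ((x - b) / a)|
      ≤ C * (|a| * R) ^ α * |ψ ((x - b) / a)| := by
    intro x
    by_cases hz : ψ ((x - b) / a) = 0
    · simp [hz]
    · have ht : |(x - b) / a| ≤ R := hR _ hz
      have hxb : |x - b| ≤ |a| * R := by
        have : |x - b| = |a| * |(x - b) / a| := by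
          rw [abs_div]
          field_simp
        rw [this]
        exact mul_le_mul_of_nonneg_left ht (le_of_lt hA)
      have hf1 : |f x - f b| ≤ C * (|a| * R) ^ α := by
        have h := hf_holder b (x - b)
        rw [add_sub_cancel] at h
        refine h.trans ?_
        exact mul_le_mul_of_nonneg_left
          (Real.rpow_le_rpow (abs_nonneg _) hxb (le_of_lt hα_pos)) hC
      rw [abs_mul]
      exact mul_le_mul_of_nonneg_right hf1 (abs_nonneg _)
  -- integral bound
  have hint2 : (∫ x : ℝ, |ψ ((x - b) / a)|) = |a| * ∫ x, |ψ x| := by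
    rw [integral_sub_right_eq_self (fun x : ℝ => |ψ (x / a)|) b,
      Measure.integral_comp_div (fun x => |ψ x|) a, smul_eq_mul]
  have hIb : |∫ x : ℝ, (f x - f b) * ψ ((x - b) / a)|
      ≤ C * (|a| * R) ^ α * (|a| * ∫ x, |ψ x|) := by
    calc |∫ x : ℝ, (f x - f b) * ψ ((x - b) / a)|
        ≤ ∫ x : ℝ, |(f x - f b) * ψ ((x - b) / a)| := by
          have h := norm_integral_le_integral_norm (μ := volume)
            (fun x : ℝ => (f x - f b) * ψ ((x - b) / a))
          simp only [Real.norm_eq_abs] at h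
          exact h
      _ ≤ ∫ x : ℝ, C * (|a| * R) ^ α * |ψ ((x - b) / a)| := by
          refine integral_mono hfb.abs ((hcomp.abs).const_mul _) hpt
      _ = C * (|a| * R) ^ α * (|a| * ∫ x, |ψ x|) := by
          rw [MeasureTheory.integral_const_mul, hint2]
  calc c * |∫ x : ℝ, (f x - f b) * ψ ((x - b) / a)|
      ≤ c * (C * (|a| * R) ^ α * (|a| * ∫ x, |ψ x|)) :=
        mul_le_mul_of_nonneg_left hIb (le_of_lt hcpos)
    _ = (C * R ^ α * ∫ x, |ψ x|) * (c * |a| ^ α * |a|) := by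
        rw [Real.mul_rpow (le_of_lt hA) hR0]; ring
    _ = (C * R ^ α * ∫ x, |ψ x|) * |a| ^ (α + 1/2) := by
        have hpow : |a| ^ (α + 1/2) = c * |a| ^ α * |a| := by
          rw [hc, show α + 1/2 = -1/2 + α + 1 by ring, Real.rpow_add hA,
            Real.rpow_add hA, Real.rpow_one]
        rw [hpow]
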